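/- arXiv:2106.15483 — 2 statements merged into one kernel-verified Lean document; each statement's English description precedes it below -/
import Mathlib

section
/- Let S, φ : ℂ → Matrix (Fin N) (Fin N) ℂ be twice continuously real-differentiable with S(z) invertible for every z. Define A_{z̄} := −i·S⁻¹·∂_{z̄}S, A_z := i·∂_z(Sᴴ)·(Sᴴ)⁻¹, the gauge invariants Ω := S·Sᴴ and Υ := S·φ·S⁻¹, and the adjoint covariant derivatives D_{z̄}φ := ∂_{z̄}φ + i·[A_{z̄}, φ] and D_zX := ∂_zX + i·[A_z, X]. Then pointwise D_z(D_{z̄}φ) = S⁻¹·( ∂_z(∂_{z̄}Υ) + [∂_{z̄}Υ, (∂_zΩ)·Ω⁻¹] )·S. -/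
open Matrix Complex

attribute [local instance] Matrix.frobeniusNormedAddCommGroup Matrix.frobeniusNormedSpace

/-- The Wirtinger derivative `∂_z f (w) = (1/2)(Df(w)[1] − i·Df(w)[i])`. -/
noncomputable def dz {E : Type*} [NormedAddCommGroup E] [NormedSpace ℂ E]
    (f : ℂ → E) (w : ℂ) : E :=
  (2 : ℂ)⁻¹ • (fderiv ℝ f w 1 - Complex.I • fderiv ℝ f w Complex.I)

/-- The Wirtinger derivative `∂_{z̄} f (w) = (1/2)(Df(w)[1] + i·Df(w)[i])`. -/
noncomputable def dzbar {E : Type*} [NormedAddCommGroup E] [NormedSpace ℂ E]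
    (f : ℂ → E) (w : ℂ) : E :=
  (2 : ℂ)⁻¹ • (fderiv ℝ f w 1 + Complex.I • fderiv ℝ f w Complex.I)

attribute [local instance] Matrix.frobeniusNormedRing Matrix.frobeniusNormedAlgebra

section Helpers

variable {N : ℕ}

local notation "M" => Matrix (Fin N) (Fin N) ℂ

lemma dz_mul (f g : ℂ → M) (z : ℂ) (hf : DifferentiableAt ℝ f z)
    (hg : DifferentiableAt ℝ g z) :
    dz (fun w => f w * g w) z = dz f z * g z + f z * dz g z := by
  simp only [dz, fderiv_fun_mul' hf hg, ContinuousLinearMap.add_apply,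
    ContinuousLinearMap.smul_apply, ContinuousLinearMap.smulRight_apply, smul_eq_mul, op_smul_eq_mul,
    smul_mul_assoc, mul_smul_comm, smul_add, smul_sub, add_mul, mul_add, sub_mul, mul_sub]
  abel

lemma dzbar_mul (f g : ℂ → M) (z : ℂ) (hf : DifferentiableAt ℝ f z)
    (hg : DifferentiableAt ℝ g z) :
    dzbar (fun w => f w * g w) z = dzbar f z * g z + f z * dzbar g z := by
  simp only [dzbar, fderiv_fun_mul' hf hg, ContinuousLinearMap.add_apply,
    ContinuousLinearMap.smul_apply, ContinuousLinearMap.smulRight_apply, smul_eq_mul, op_smul_eq_mul,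
    smul_mul_assoc, mul_smul_comm, smul_add, add_mul, mul_add]
  abel

-- inverse as Ring.inverse
lemma inv_eq_ring_inverse (S : ℂ → M) : (fun w => (S w)⁻¹) = fun w => Ring.inverse (S w) := by
  funext w; exact Matrix.nonsing_inv_eq_ringInverse _

lemma diffAt_inv (S : ℂ → M) (z : ℂ) (hS : DifferentiableAt ℝ S z) (hz : IsUnit (S z)) :
    DifferentiableAt ℝ (fun w => (S w)⁻¹) z := by
  rw [inv_eq_ring_inverse]
  exact hS.inverse hz

lemma contDiffAt_inv' (S : ℂ → M) (z : ℂ) (hS : ContDiffAt ℝ 2 S z) (hz : IsUnit (S z)) :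
    ContDiffAt ℝ 2 (fun w => (S w)⁻¹) z := by
  rw [inv_eq_ring_inverse]
  obtain ⟨u, hu⟩ := hz
  have := contDiffAt_ringInverse (n := 2) ℝ u
  rw [hu] at this
  exact this.comp z hS

lemma fderiv_inv_apply (S : ℂ → M) (z : ℂ) (hS : DifferentiableAt ℝ S z) (hz : IsUnit (S z))
    (v : ℂ) :
    fderiv ℝ (fun w => (S w)⁻¹) z v = -((S z)⁻¹ * fderiv ℝ S z v * (S z)⁻¹) := by
  rw [inv_eq_ring_inverse]
  obtain ⟨u, hu⟩ := hz
  have h1 : HasFDerivAt (fun w => Ring.inverse (S w))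
      (((-ContinuousLinearMap.mulLeftRight ℝ M ↑u⁻¹ ↑u⁻¹).comp (fderiv ℝ S z))) z := by
    have := (hasFDerivAt_ringInverse (𝕜 := ℝ) u)
    rw [hu] at this
    exact this.comp z hS.hasFDerivAt
  erw [h1.fderiv]
  have hui : (↑u⁻¹ : M) = (S z)⁻¹ := by
    rw [← hu, Matrix.nonsing_inv_eq_ringInverse, Ring.inverse_unit]
  simp [hui, ContinuousLinearMap.mulLeftRight_apply]
  rfl

lemma dz_inv (S : ℂ → M) (z : ℂ) (hS : DifferentiableAt ℝ S z) (hz : IsUnit (S z)) :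
    dz (fun w => (S w)⁻¹) z = -((S z)⁻¹ * dz S z * (S z)⁻¹) := by
  simp only [dz]
  erw [fderiv_inv_apply S z hS hz 1, fderiv_inv_apply S z hS hz I]
  simp only [mul_smul_comm, smul_mul_assoc,
    smul_sub, smul_neg, mul_sub, sub_mul, mul_neg, neg_mul, neg_sub, smul_smul]
  exact neg_sub_neg (_ : M) _

lemma dzbar_inv (S : ℂ → M) (z : ℂ) (hS : DifferentiableAt ℝ S z) (hz : IsUnit (S z)) :
    dzbar (fun w => (S w)⁻¹) z = -((S z)⁻¹ * dzbar S z * (S z)⁻¹) := by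
  simp only [dzbar]
  erw [fderiv_inv_apply S z hS hz 1, fderiv_inv_apply S z hS hz I]
  simp only [mul_smul_comm, smul_mul_assoc,
    smul_add, smul_neg, mul_add, add_mul, mul_neg, neg_mul, neg_add, smul_smul]
  rfl

-- conjTranspose as CLM
noncomputable def ctCLM (N : ℕ) : M →L[ℝ] M :=
  LinearMap.toContinuousLinearMap
    { toFun := fun A => Aᴴ
      map_add' := fun A B => Matrix.conjTranspose_add A B
      map_smul' := fun r A => by
        ext i j
        simp [Matrix.conjTranspose_apply, star_smul] }

lemma diffAt_conjT (S : ℂ → M) (z : ℂ) (hS : DifferentiableAt ℝ S z) :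
    DifferentiableAt ℝ (fun w => (S w)ᴴ) z :=
  ((ctCLM N).differentiableAt).comp z hS

-- differentiability of dzbar f when f is C²
lemma diffAt_dzbar (f : ℂ → M) (z : ℂ) (hf : ContDiffAt ℝ 2 f z) :
    DifferentiableAt ℝ (fun w => dzbar f w) z := by
  letI : NormedAddCommGroup (ℂ →L[ℝ] M) := ContinuousLinearMap.toNormedAddCommGroup
  letI : NormedSpace ℝ (ℂ →L[ℝ] M) := ContinuousLinearMap.toNormedSpace
  have h1 : ContDiffAt ℝ 1 (fderiv ℝ f) z := hf.fderiv_right (by norm_num)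
  have h2 : ∀ v : ℂ, DifferentiableAt ℝ (fun w => fderiv ℝ f w v) z := fun v =>
    (h1.clm_apply contDiffAt_const).differentiableAt one_ne_zero
  simp only [dzbar]
  exact (((h2 1).add ((h2 Complex.I).const_smul Complex.I)).const_smul ((2:ℂ)⁻¹))

lemma key_alg {R : Type*} [Ring R] (s t h u a b c v : R)
    (hts : t * s = 1) (hhu : h * u = 1) :
    (-(t * a * (t * (v * s))) + (t * c) * s + (t * v) * a)
      - (b * u * (t * (v * s)) - (t * (v * s)) * (b * u))
    = t * (c + (v * ((a * h + s * b) * (u * t)) - ((a * h + s * b) * (u * t)) * v)) * s := by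
  have htc : ∀ x : R, t * (s * x) = x := fun x => by rw [← mul_assoc, hts, one_mul]
  have hcu : ∀ x : R, h * (u * x) = x := fun x => by rw [← mul_assoc, hhu, one_mul]
  simp only [mul_add, add_mul, mul_sub, sub_mul, mul_assoc, hts, hhu, mul_one, htc, hcu]
  abel


end Helpers

/-- The covariant Laplacian of the adjoint scalar field in terms of the moduli-matrix
gauge invariants `Ω = SSᴴ` and `Υ = SφS⁻¹`:
`D_z(D_{z̄}φ) = S⁻¹·(∂_z∂_{z̄}Υ + [∂_{z̄}Υ, (∂_zΩ)·Ω⁻¹])·S`, where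
`A_{z̄} = −i·S⁻¹·∂_{z̄}S`, `A_z = i·∂_z(Sᴴ)·(Sᴴ)⁻¹`, `D_{z̄}φ = ∂_{z̄}φ + i[A_{z̄},φ]`
and `D_zX = ∂_zX + i[A_z,X]`. -/
theorem covariant_laplacian_moduli_matrix (N : ℕ)
    (S φ : ℂ → Matrix (Fin N) (Fin N) ℂ)
    (hS : ContDiff ℝ 2 S) (hφ : ContDiff ℝ 2 φ)
    (hSinv : ∀ z : ℂ, IsUnit (S z))
    (Azbar Az Ω Υ Dzbarφ : ℂ → Matrix (Fin N) (Fin N) ℂ)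
    (hAzbar : ∀ z, Azbar z = -Complex.I • ((S z)⁻¹ * dzbar S z))
    (hAz : ∀ z, Az z = Complex.I • (dz (fun w => (S w)ᴴ) z * ((S z)ᴴ)⁻¹))
    (hΩ : ∀ z, Ω z = S z * (S z)ᴴ)
    (hΥ : ∀ z, Υ z = S z * φ z * (S z)⁻¹)
    (hDzbarφ : ∀ z, Dzbarφ z = dzbar φ z + Complex.I • (Azbar z * φ z - φ z * Azbar z)) :
    ∀ z : ℂ, dz Dzbarφ z + Complex.I • (Az z * Dzbarφ z - Dzbarφ z * Az z)
      = (S z)⁻¹ * (dz (fun w => dzbar Υ w) z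
          + (dzbar Υ z * (dz Ω z * (Ω z)⁻¹) - (dz Ω z * (Ω z)⁻¹) * dzbar Υ z)) * S z := by
  have hSd : ∀ w, DifferentiableAt ℝ S w := fun w =>
    (hS.differentiable (by norm_num)).differentiableAt
  have hφd : ∀ w, DifferentiableAt ℝ φ w := fun w =>
    (hφ.differentiable (by norm_num)).differentiableAt
  have hSinvd : ∀ w, DifferentiableAt ℝ (fun x => (S x)⁻¹) w := fun w =>
    diffAt_inv S w (hSd w) (hSinv w)
  have hdet : ∀ w, IsUnit (S w).det := fun w => (Matrix.isUnit_iff_isUnit_det _).mp (hSinv w)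
  have hΥfun : Υ = fun w => S w * φ w * (S w)⁻¹ := funext hΥ
  have hΥca : ∀ w, ContDiffAt ℝ 2 Υ w := by
    rw [hΥfun]
    exact fun w => (hS.contDiffAt.mul hφ.contDiffAt).mul
      (contDiffAt_inv' S w hS.contDiffAt (hSinv w))
  -- key pointwise identity
  have key : ∀ w, Dzbarφ w = (S w)⁻¹ * dzbar Υ w * S w := by
    intro w
    have hm : dzbar Υ w = (dzbar S w * φ w + S w * dzbar φ w) * (S w)⁻¹
        + (S w * φ w) * -((S w)⁻¹ * dzbar S w * (S w)⁻¹) := by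
      conv_lhs => rw [hΥfun]
      rw [dzbar_mul (fun x => S x * φ x) (fun x => (S x)⁻¹) w ((hSd w).mul (hφd w)) (hSinvd w),
        dzbar_mul S φ w (hSd w) (hφd w), dzbar_inv S w (hSd w) (hSinv w)]
    have hTS : (S w)⁻¹ * S w = 1 := Matrix.nonsing_inv_mul _ (hdet w)
    have htc : ∀ x : Matrix (Fin N) (Fin N) ℂ, (S w)⁻¹ * (S w * x) = x := fun x => by
      rw [← mul_assoc, hTS, one_mul]
    rw [hDzbarφ, hAzbar, hm]
    simp only [neg_smul, neg_mul, mul_neg, smul_mul_assoc, mul_smul_comm, smul_sub, smul_neg,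
      smul_smul, Complex.I_mul_I, neg_neg, one_smul, neg_one_smul, smul_add, sub_neg_eq_add,
      mul_add, add_mul, mul_sub, sub_mul, mul_assoc, hTS, mul_one, htc]
    abel
  have hDfun : Dzbarφ = fun w => (S w)⁻¹ * dzbar Υ w * S w := funext key
  intro z
  have hdΥd : DifferentiableAt ℝ (fun w => dzbar Υ w) z := diffAt_dzbar Υ z (hΥca z)
  have hTS : (S z)⁻¹ * S z = 1 := Matrix.nonsing_inv_mul _ (hdet z)
  have hdetH : IsUnit ((S z)ᴴ).det := by
    rw [Matrix.det_conjTranspose]; exact (hdet z).star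
  have hHU : (S z)ᴴ * ((S z)ᴴ)⁻¹ = 1 := Matrix.mul_nonsing_inv _ hdetH
  have htc : ∀ x : Matrix (Fin N) (Fin N) ℂ, (S z)⁻¹ * (S z * x) = x := fun x => by
    rw [← mul_assoc, hTS, one_mul]
  have hcu : ∀ x : Matrix (Fin N) (Fin N) ℂ, (S z)ᴴ * (((S z)ᴴ)⁻¹ * x) = x := fun x => by
    rw [← mul_assoc, hHU, one_mul]
  have hdzD : dz Dzbarφ z = (-((S z)⁻¹ * dz S z * (S z)⁻¹) * dzbar Υ z + (S z)⁻¹ *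
      dz (fun w => dzbar Υ w) z) * S z + ((S z)⁻¹ * dzbar Υ z) * dz S z := by
    conv_lhs => rw [hDfun]
    rw [dz_mul (fun w => (S w)⁻¹ * dzbar Υ w) S z ((hSinvd z).mul hdΥd) (hSd z),
      dz_mul (fun w => (S w)⁻¹) (fun w => dzbar Υ w) z (hSinvd z) hdΥd,
      dz_inv S z (hSd z) (hSinv z)]
  have hdzΩ : dz Ω z = dz S z * (S z)ᴴ + S z * dz (fun w => (S w)ᴴ) z := by
    conv_lhs => rw [funext hΩ]
    rw [dz_mul S (fun w => (S w)ᴴ) z (hSd z) (diffAt_conjT S z (hSd z))]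
  have hΩinv : (Ω z)⁻¹ = ((S z)ᴴ)⁻¹ * (S z)⁻¹ := by
    rw [hΩ, Matrix.mul_inv_rev]
  rw [hdzD, hdzΩ, hΩinv, hAz, key z]
  simp only [smul_mul_assoc, mul_smul_comm, smul_sub, smul_smul, Complex.I_mul_I, neg_smul,
    one_smul, neg_mul, mul_neg, neg_neg, sub_neg_eq_add,
    mul_add, add_mul, mul_sub, sub_mul, mul_assoc, hTS, hHU, mul_one, htc, hcu]
  abel
end

section
/- Let A_{z̄} : ℂ → Matrix (Fin N) (Fin N) ℂ be continuous and set A_z := (A_{z̄})ᴴ pointwise. Let H : ℂ → Matrix (Fin N) (Fin Nf) ℂ be continuously real-differentiable with D_{z̄}H := ∂_{z̄}H + i·A_{z̄}·H = 0 everywhere. Let α : ℂ → Matrix (Fin N) (Fin Nf) ℂ and β : ℂ → Matrix (Fin N) (Fin N) ℂ be continuously real-differentiable with compact support, and suppose D_zα := ∂_zα + i·A_z·α = 0 everywhere. Then, with D_{z̄}(βᴴ) := ∂_{z̄}(βᴴ) + i·[A_{z̄}, βᴴ], the following L² orthogonality identity holds: ∫_ℂ tr[(D_{z̄}(βᴴ)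 + i·√2·α·Hᴴ)ᴴ·(D_{z̄}(βᴴ) + i·√2·α·Hᴴ)] = ∫_ℂ tr[(D_{z̄}(βᴴ))ᴴ·(D_{z̄}(βᴴ))] + 2·∫_ℂ tr[(α·Hᴴ)ᴴ·(α·Hᴴ)]. In particular, if D_{z̄}(βᴴ) + i·√2·α·Hᴴ = 0 everywhere, then α·Hᴴ = 0 and D_{z̄}(βᴴ) = 0 everywhere. -/
open Matrix Complex MeasureTheory

attribute [local instance] Matrix.frobeniusNormedAddCommGroup Matrix.frobeniusNormedSpace

/-! ### Auxiliary lemmas -/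

section IntegralZero

lemma line_integral_deriv_zero (f : ℝ → ℂ) (hf : ContDiff ℝ 1 f)
    (hsupp : HasCompactSupport f) : ∫ x : ℝ, deriv f x = 0 := by
  have hInt : Integrable (deriv f) :=
    (hf.continuous_deriv le_rfl).integrable_of_hasCompactSupport hsupp.deriv
  rw [← setIntegral_univ, ← Set.Iic_union_Ioi (a := (0:ℝ)),
    setIntegral_union (Set.Iic_disjoint_Ioi le_rfl) measurableSet_Ioi
      hInt.integrableOn hInt.integrableOn,
    hsupp.integral_Iic_deriv_eq hf, hsupp.integral_Ioi_deriv_eq hf]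
  ring

lemma integral_fderiv_dir (f : ℂ → ℂ) (hf : ContDiff ℝ 1 f)
    (hs : HasCompactSupport f) (v : ℂ) (hv : v = 1 ∨ v = Complex.I) :
    (∫ z : ℂ, fderiv ℝ f z v) = 0 := by
  set F : ℂ → ℂ := fun z => fderiv ℝ f z v with hF
  have hFc : Continuous F := by
    have := hf.continuous_fderiv_apply one_ne_zero
    exact this.comp (continuous_id.prodMk continuous_const)
  have hFs : HasCompactSupport F := hs.fderiv_apply ℝ v
  have hFi : Integrable F := hFc.integrable_of_hasCompactSupport hFs
  obtain ⟨R, hR⟩ := hs.isBounded.subset_closedBall 0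
  have h1 : (∫ p : ℝ × ℝ, F (Complex.measurableEquivRealProd.symm p)) = ∫ z : ℂ, F z := by
    rw [← Complex.volume_preserving_equiv_real_prod.integral_comp
      Complex.measurableEquivRealProd.measurableEmbedding
      (fun p => F (Complex.measurableEquivRealProd.symm p))]
    simp
  have hGi : Integrable (fun p : ℝ × ℝ => F (Complex.measurableEquivRealProd.symm p)) := by
    exact ((Complex.volume_preserving_equiv_real_prod.symm
        Complex.measurableEquivRealProd).integrable_comp_emb
      Complex.measurableEquivRealProd.symm.measurableEmbedding).mpr hFi
  rw [← h1]
  have hkey : ∀ x y : ℝ, F (Complex.measurableEquivRealProd.symm (x, y))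
      = fderiv ℝ f (Complex.mk x y) v := by
    intro x y; rfl
  rcases hv with rfl | rfl
  · -- v = 1 : integrate in x first
    rw [Measure.volume_eq_prod] at hGi ⊢
    rw [MeasureTheory.integral_prod_symm _ hGi]
    have inner : ∀ y : ℝ, (∫ x : ℝ, F (Complex.measurableEquivRealProd.symm (x, y))) = 0 := by
      intro y
      set φ : ℝ → ℂ := fun x => f (Complex.mk x y) with hφ
      have hline : ∀ x : ℝ, HasDerivAt (fun t : ℝ => (Complex.mk t y : ℂ)) 1 x := by
        intro x
        have h0 : HasDerivAt (fun t : ℝ => ((t : ℂ) + Complex.mk 0 y))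
            ((Complex.ofRealCLM : ℝ →L[ℝ] ℂ) 1) x :=
          (Complex.ofRealCLM.hasDerivAt).add_const _
        have : (fun t : ℝ => ((t : ℂ) + Complex.mk 0 y)) = fun t : ℝ => (Complex.mk t y : ℂ) := by
          funext t; apply Complex.ext <;> simp
        rw [this] at h0
        simpa using h0
      have hφd : ∀ x : ℝ, HasDerivAt φ (fderiv ℝ f (Complex.mk x y) 1) x := by
        intro x
        have hfd := (hf.differentiable one_ne_zero (Complex.mk x y)).hasFDerivAt
        exact hfd.comp_hasDerivAt x (hline x)
      have hg1 : ContDiff ℝ 1 (fun t : ℝ => (Complex.mk t y : ℂ)) := by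
        have : (fun t : ℝ => (Complex.mk t y : ℂ)) = fun t : ℝ => ((t : ℂ) + Complex.mk 0 y) := by
          funext t; apply Complex.ext <;> simp
        rw [this]
        exact Complex.ofRealCLM.contDiff.add contDiff_const
      have hφ1 : ContDiff ℝ 1 φ := by exact hf.comp hg1
      have hφs : HasCompactSupport φ := by
        apply HasCompactSupport.intro (isCompact_Icc (a := -R) (b := R))
        intro x hx
        by_contra hne
        have hmem : Complex.mk x y ∈ Metric.closedBall (0:ℂ) R :=
          hR (subset_closure (Function.mem_support.mpr hne))
        have : ‖Complex.mk x y‖ ≤ R := by simpa using hmem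
        have hre : |x| ≤ R := le_trans (by simpa using Complex.abs_re_le_norm (Complex.mk x y)) this
        exact hx (Set.mem_Icc.mpr (abs_le.mp hre))
      have : (∫ x : ℝ, F (Complex.measurableEquivRealProd.symm (x, y)))
          = ∫ x : ℝ, deriv φ x := by
        apply integral_congr_ae; filter_upwards with x
        rw [hkey, ← (hφd x).deriv]
      rw [this]
      exact line_integral_deriv_zero φ hφ1 hφs
    have inner' : ∀ y : ℝ, (∫ x : ℝ, F (Complex.mk x y)) = 0 := inner
    simp [inner']
  · -- v = I : integrate in y first
    rw [Measure.volume_eq_prod] at hGi ⊢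
    rw [MeasureTheory.integral_prod _ hGi]
    have inner : ∀ x : ℝ, (∫ y : ℝ, F (Complex.measurableEquivRealProd.symm (x, y))) = 0 := by
      intro x
      set φ : ℝ → ℂ := fun y => f (Complex.mk x y) with hφ
      have hline : ∀ y : ℝ, HasDerivAt (fun t : ℝ => (Complex.mk x t : ℂ)) Complex.I y := by
        intro y
        have h0 : HasDerivAt (fun t : ℝ => ((t : ℂ) * Complex.I + Complex.mk x 0))
            ((1:ℂ) * Complex.I) y :=
          ((Complex.ofRealCLM.hasDerivAt (x := y)).mul_const Complex.I).add_const _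
        have : (fun t : ℝ => ((t : ℂ) * Complex.I + Complex.mk x 0))
            = fun t : ℝ => (Complex.mk x t : ℂ) := by
          funext t; apply Complex.ext <;> simp
        rw [this] at h0
        simpa using h0
      have hφd : ∀ y : ℝ, HasDerivAt φ (fderiv ℝ f (Complex.mk x y) Complex.I) y := by
        intro y
        have hfd := (hf.differentiable one_ne_zero (Complex.mk x y)).hasFDerivAt
        exact hfd.comp_hasDerivAt y (hline y)
      have hg1 : ContDiff ℝ 1 (fun t : ℝ => (Complex.mk x t : ℂ)) := by
        have : (fun t : ℝ => (Complex.mk x t : ℂ))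
            = fun t : ℝ => ((t : ℂ) * Complex.I + Complex.mk x 0) := by
          funext t; apply Complex.ext <;> simp
        rw [this]
        exact (Complex.ofRealCLM.contDiff.mul contDiff_const).add contDiff_const
      have hφ1 : ContDiff ℝ 1 φ := by exact hf.comp hg1
      have hφs : HasCompactSupport φ := by
        apply HasCompactSupport.intro (isCompact_Icc (a := -R) (b := R))
        intro y hy
        by_contra hne
        have hmem : Complex.mk x y ∈ Metric.closedBall (0:ℂ) R :=
          hR (subset_closure (Function.mem_support.mpr hne))
        have : ‖Complex.mk x y‖ ≤ R := by simpa using hmem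
        have him : |y| ≤ R := le_trans (by simpa using Complex.abs_im_le_norm (Complex.mk x y)) this
        exact hy (Set.mem_Icc.mpr (abs_le.mp him))
      have : (∫ y : ℝ, F (Complex.measurableEquivRealProd.symm (x, y)))
          = ∫ y : ℝ, deriv φ y := by
        apply integral_congr_ae; filter_upwards with y
        rw [hkey, ← (hφd y).deriv]
      rw [this]
      exact line_integral_deriv_zero φ hφ1 hφs
    have inner' : ∀ x : ℝ, (∫ y : ℝ, F (Complex.mk x y)) = 0 := inner
    simp [inner']

lemma integral_dz_zero (f : ℂ → ℂ) (hf : ContDiff ℝ 1 f)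
    (hs : HasCompactSupport f) : (∫ z : ℂ, dz f z) = 0 := by
  have hc : Continuous fun p : ℂ × ℂ => fderiv ℝ f p.1 p.2 := hf.continuous_fderiv_apply one_ne_zero
  have h1c : Continuous fun z => fderiv ℝ f z 1 :=
    hc.comp (continuous_id.prodMk continuous_const)
  have hIc : Continuous fun z => fderiv ℝ f z Complex.I :=
    hc.comp (continuous_id.prodMk continuous_const)
  have h1i : Integrable fun z => fderiv ℝ f z 1 :=
    h1c.integrable_of_hasCompactSupport (hs.fderiv_apply ℝ 1)
  have hIi : Integrable fun z => fderiv ℝ f z Complex.I :=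
    hIc.integrable_of_hasCompactSupport (hs.fderiv_apply ℝ Complex.I)
  have hIi' : Integrable fun z => Complex.I • fderiv ℝ f z Complex.I := hIi.smul Complex.I
  unfold dz
  rw [integral_smul, integral_sub h1i hIi', integral_smul,
    integral_fderiv_dir f hf hs 1 (Or.inl rfl),
    integral_fderiv_dir f hf hs Complex.I (Or.inr rfl)]
  simp

end IntegralZero

section Helpers
variable {m n p : Type*} [Fintype m] [Fintype n] [Fintype p]

/-- conjugate transpose as a continuous real-linear map (Frobenius norm). -/
noncomputable def cTCLM : Matrix m n ℂ →L[ℝ] Matrix n m ℂ :=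
  LinearMap.toContinuousLinearMap
  { toFun := conjTranspose
    map_add' := fun A B => conjTranspose_add A B
    map_smul' := fun r A => by
      ext i j
      simp [conjTranspose_apply, star_smul] }

@[simp] lemma cTCLM_apply (A : Matrix m n ℂ) : cTCLM A = Aᴴ := rfl

/-- trace as a continuous real-linear map. -/
noncomputable def trCLM (n : Type*) [Fintype n] : Matrix n n ℂ →L[ℝ] ℂ :=
  LinearMap.toContinuousLinearMap ((Matrix.traceLinearMap n ℂ ℂ).restrictScalars ℝ)

@[simp] lemma trCLM_apply (A : Matrix n n ℂ) : trCLM n A = A.trace := rfl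

/-- matrix multiplication as a continuous real-bilinear map. -/
noncomputable def mulCLM : Matrix m n ℂ →L[ℝ] Matrix n p ℂ →L[ℝ] Matrix m p ℂ :=
  LinearMap.toContinuousLinearMap
  { toFun := fun A => LinearMap.toContinuousLinearMap
      { toFun := fun B => A * B
        map_add' := fun B C => Matrix.mul_add A B C
        map_smul' := fun r B => (Matrix.mul_smul A r B) }
    map_add' := fun A A' => by
      apply ContinuousLinearMap.ext
      intro B
      simp [Matrix.add_mul]
    map_smul' := fun r A => by
      apply ContinuousLinearMap.ext
      intro B
      simp [Matrix.smul_mul] }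

@[simp] lemma mulCLM_apply (A : Matrix m n ℂ) (B : Matrix n p ℂ) :
    mulCLM A B = A * B := rfl

lemma contDiff_matmul {M : ℂ → Matrix m n ℂ} {N : ℂ → Matrix n p ℂ}
    (hM : ContDiff ℝ 1 M) (hN : ContDiff ℝ 1 N) :
    ContDiff ℝ 1 (fun w => M w * N w) := by
  exact ((mulCLM (m := m) (n := n) (p := p)).isBoundedBilinearMap.contDiff).comp (hM.prodMk hN)

lemma continuous_matmul {M : ℂ → Matrix m n ℂ} {N : ℂ → Matrix n p ℂ}
    (hM : Continuous M) (hN : Continuous N) :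
    Continuous (fun w => M w * N w) := by
  exact ((mulCLM (m := m) (n := n) (p := p)).isBoundedBilinearMap.continuous).comp (hM.prodMk hN)

lemma contDiff_cT {M : ℂ → Matrix m n ℂ} (hM : ContDiff ℝ 1 M) :
    ContDiff ℝ 1 (fun w => (M w)ᴴ) := by
  exact (cTCLM (m := m) (n := n)).contDiff.comp hM

lemma continuous_cT {M : ℂ → Matrix m n ℂ} (hM : Continuous M) :
    Continuous (fun w => (M w)ᴴ) := by
  exact (cTCLM (m := m) (n := n)).continuous.comp hM

section DzInst
attribute [local instance 2000] NormedSpace.complexToReal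
attribute [local instance 2000] NormedSpace.toModule

lemma fderiv_matmul {M : ℂ → Matrix m n ℂ} {N : ℂ → Matrix n p ℂ} {z : ℂ}
    (hM : DifferentiableAt ℝ M z) (hN : DifferentiableAt ℝ N z) (v : ℂ) :
    fderiv ℝ (fun w => M w * N w) z v
      = fderiv ℝ M z v * N z + M z * fderiv ℝ N z v := by
  have h := ((mulCLM.isBoundedBilinearMap.hasFDerivAt
      (M z, N z)).comp z ((hM.hasFDerivAt).prodMk (hN.hasFDerivAt)))
  have : fderiv ℝ (fun w => M w * N w) z
      = (mulCLM.isBoundedBilinearMap.deriv (M z, N z)).comp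
          ((fderiv ℝ M z).prod (fderiv ℝ N z)) := by
    exact h.fderiv
  rw [this]
  exact add_comm _ _

lemma fderiv_cT {M : ℂ → Matrix m n ℂ} {z : ℂ}
    (hM : DifferentiableAt ℝ M z) (v : ℂ) :
    fderiv ℝ (fun w => (M w)ᴴ) z v = (fderiv ℝ M z v)ᴴ := by
  have h := (cTCLM.hasFDerivAt (x := M z)).comp z hM.hasFDerivAt
  have : fderiv ℝ (fun w => (M w)ᴴ) z = cTCLM.comp (fderiv ℝ M z) := by
    exact h.fderiv
  rw [this]; rfl

lemma fderiv_trace {M : ℂ → Matrix n n ℂ} {z : ℂ}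
    (hM : DifferentiableAt ℝ M z) (v : ℂ) :
    fderiv ℝ (fun w => (M w).trace) z v = (fderiv ℝ M z v).trace := by
  have h := ((trCLM n).hasFDerivAt (x := M z)).comp z hM.hasFDerivAt
  have : fderiv ℝ (fun w => (M w).trace) z = (trCLM n).comp (fderiv ℝ M z) := by
    exact h.fderiv
  rw [this]; rfl

lemma dz_matmul {M : ℂ → Matrix m n ℂ} {N : ℂ → Matrix n p ℂ} {z : ℂ}
    (hM : DifferentiableAt ℝ M z) (hN : DifferentiableAt ℝ N z) :
    dz (fun w => M w * N w) z = dz M z * N z + M z * dz N z := by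
  unfold dz
  erw [fderiv_matmul hM hN 1, fderiv_matmul hM hN Complex.I]
  have key : ∀ (a b : Matrix m n ℂ) (c d : Matrix n p ℂ),
      (2 : ℂ)⁻¹ • ((a * N z + M z * c) - Complex.I • (b * N z + M z * d))
        = (2 : ℂ)⁻¹ • (a - Complex.I • b) * N z + M z * (2 : ℂ)⁻¹ • (c - Complex.I • d) := by
    intro a b c d
    simp only [Matrix.sub_mul, Matrix.mul_sub, Matrix.smul_mul, Matrix.mul_smul, smul_add, smul_sub]
    module
  exact key _ _ _ _

lemma dzbar_cT {M : ℂ → Matrix m n ℂ} {z : ℂ} (hM : DifferentiableAt ℝ M z) :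
    dzbar (fun w => (M w)ᴴ) z = (dz M z)ᴴ := by
  unfold dz dzbar
  erw [fderiv_cT hM 1, fderiv_cT hM Complex.I]
  rw [conjTranspose_smul, conjTranspose_sub, conjTranspose_smul]
  simp [Complex.star_def, Complex.conj_I, sub_neg_eq_add]
  rfl

lemma dz_cT {M : ℂ → Matrix m n ℂ} {z : ℂ} (hM : DifferentiableAt ℝ M z) :
    dz (fun w => (M w)ᴴ) z = (dzbar M z)ᴴ := by
  unfold dz dzbar
  erw [fderiv_cT hM 1, fderiv_cT hM Complex.I]
  have key : ∀ a b : Matrix m n ℂ,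
      (2 : ℂ)⁻¹ • (aᴴ - Complex.I • bᴴ) = ((2 : ℂ)⁻¹ • (a + Complex.I • b))ᴴ := by
    intro a b
    rw [conjTranspose_smul, conjTranspose_add, conjTranspose_smul]
    simp [Complex.star_def, Complex.conj_I]
    module
  exact key _ _

lemma dz_trace {M : ℂ → Matrix n n ℂ} {z : ℂ} (hM : DifferentiableAt ℝ M z) :
    dz (fun w => (M w).trace) z = (dz M z).trace := by
  unfold dz
  erw [fderiv_trace hM 1, fderiv_trace hM Complex.I]
  simp [Matrix.trace_sub, Matrix.trace_smul, smul_eq_mul]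
  rfl

end DzInst

lemma continuous_dzbar {E : Type*} [NormedAddCommGroup E] [NormedSpace ℂ E]
    (f : ℂ → E) (hf : ContDiff ℝ 1 f) : Continuous (dzbar f) := by
  have hc : Continuous fun p : ℂ × ℂ => fderiv ℝ f p.1 p.2 := hf.continuous_fderiv_apply one_ne_zero
  have h1 : Continuous fun z => fderiv ℝ f z 1 :=
    hc.comp (continuous_id.prodMk continuous_const)
  have hI : Continuous fun z => fderiv ℝ f z Complex.I :=
    hc.comp (continuous_id.prodMk continuous_const)
  exact ((h1.add (hI.const_smul Complex.I)).const_smul ((2:ℂ)⁻¹))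

lemma hasCompactSupport_dzbar {E : Type*} [NormedAddCommGroup E] [NormedSpace ℂ E]
    (f : ℂ → E) (hs : HasCompactSupport f) : HasCompactSupport (dzbar f) := by
  have := (hs.fderiv ℝ).comp_left
    (g := fun L : ℂ →L[ℝ] E => (2:ℂ)⁻¹ • (L 1 + Complex.I • L Complex.I)) (by simp)
  exact this

lemma trace_cT_mul_self {n : Type*} [Fintype n] (X : Matrix n n ℂ) :
    (Xᴴ * X).trace = ((‖X‖^2 : ℝ) : ℂ) := by
  have h1 : (‖X‖^2 : ℝ) = ∑ i, ∑ j, ‖X i j‖^2 := by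
    rw [Matrix.frobenius_norm_def,
      ← Real.rpow_natCast ((∑ i, ∑ j, ‖X i j‖ ^ (2:ℝ)) ^ (1/2 : ℝ)) 2,
      ← Real.rpow_mul (by positivity)]
    norm_num
  rw [h1]
  have h2 : ∀ z : ℂ, star z * z = ((‖z‖^2 : ℝ) : ℂ) := by
    intro z
    rw [Complex.star_def, mul_comm, Complex.mul_conj, Complex.normSq_eq_norm_sq]
    try push_cast
    try ring
  simp only [Matrix.trace, Matrix.diag, Matrix.mul_apply, Matrix.conjTranspose_apply, h2]
  push_cast
  rw [Finset.sum_comm]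

/-- the pointwise trace identity behind the vanishing of the cross term. -/
lemma trace_cross {n q : Type*} [Fintype n] [Fintype q]
    (A B Bd : Matrix n n ℂ) (a Hm : Matrix n q ℂ) :
    ((Bd - Complex.I • (B * Aᴴ - Aᴴ * B)) * (a * Hmᴴ)).trace
      = (Bd * (a * Hmᴴ) + B * ((-(Complex.I • (Aᴴ * a))) * Hmᴴ
          + a * (Complex.I • (Hmᴴ * Aᴴ)))).trace := by
  have hc : ((B * (a * Hmᴴ)) * Aᴴ).trace = (Aᴴ * (B * (a * Hmᴴ))).trace :=
    Matrix.trace_mul_comm _ _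
  simp only [Matrix.sub_mul, Matrix.smul_mul, Matrix.mul_smul, Matrix.neg_mul,
    Matrix.mul_add, Matrix.mul_neg, Matrix.add_mul, trace_add, trace_sub, trace_smul,
    trace_neg, smul_eq_mul, Matrix.mul_assoc] at *
  linear_combination (-Complex.I) * hc

end Helpers

/-- The key L² orthogonality identity in the vanishing theorem for the adjoint
fluctuation operator of BPS Yang–Mills–Chern–Simons–Higgs vortices:
`∫ tr[(D_{z̄}βᴴ + i√2·αHᴴ)ᴴ(D_{z̄}βᴴ + i√2·αHᴴ)]
  = ∫ tr[(D_{z̄}βᴴ)ᴴ(D_{z̄}βᴴ)] + 2∫ tr[(αHᴴ)ᴴ(αHᴴ)]`,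
given `D_{z̄}H = 0` and `D_zα = 0`; in particular `D_{z̄}βᴴ + i√2·αHᴴ = 0`
everywhere forces `αHᴴ = 0` and `D_{z̄}βᴴ = 0` everywhere. -/
theorem vanishing_theorem_norm_expansion (N Nf : ℕ)
    (Azbar Az : ℂ → Matrix (Fin N) (Fin N) ℂ)
    (hAzbar : Continuous Azbar) (hAz : ∀ z, Az z = (Azbar z)ᴴ)
    (H : ℂ → Matrix (Fin N) (Fin Nf) ℂ) (hH : ContDiff ℝ 1 H)
    (hDzbarH : ∀ z : ℂ, dzbar H z + Complex.I • (Azbar z * H z) = 0)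
    (α : ℂ → Matrix (Fin N) (Fin Nf) ℂ) (β : ℂ → Matrix (Fin N) (Fin N) ℂ)
    (hα : ContDiff ℝ 1 α) (hβ : ContDiff ℝ 1 β)
    (hαsupp : HasCompactSupport α) (hβsupp : HasCompactSupport β)
    (hDzα : ∀ z : ℂ, dz α z + Complex.I • (Az z * α z) = 0)
    (g aH e : ℂ → Matrix (Fin N) (Fin N) ℂ)
    (hg : ∀ z, g z = dzbar (fun w => (β w)ᴴ) z
        + Complex.I • (Azbar z * (β z)ᴴ - (β z)ᴴ * Azbar z))
    (haH : ∀ z, aH z = α z * (H z)ᴴ)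
    (he : ∀ z, e z = g z + (Complex.I * (Real.sqrt 2 : ℂ)) • aH z) :
    ((∫ z : ℂ, ((e z)ᴴ * e z).trace)
      = (∫ z : ℂ, ((g z)ᴴ * g z).trace) + 2 * (∫ z : ℂ, ((aH z)ᴴ * aH z).trace)) ∧
    ((∀ z : ℂ, e z = 0) → ∀ z : ℂ, aH z = 0 ∧ g z = 0) := by
  -- smoothness and continuity facts
  have hβH : ContDiff ℝ 1 fun w => (β w)ᴴ := contDiff_cT hβ
  have hHH : ContDiff ℝ 1 fun w => (H w)ᴴ := contDiff_cT hH
  have hαH' : ContDiff ℝ 1 fun w => α w * (H w)ᴴ := contDiff_matmul hα hHH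
  have hgfun : g = fun z => dzbar (fun w => (β w)ᴴ) z
      + Complex.I • (Azbar z * (β z)ᴴ - (β z)ᴴ * Azbar z) := funext hg
  have haHfun : aH = fun z => α z * (H z)ᴴ := funext haH
  have hefun : e = fun z => g z + (Complex.I * (Real.sqrt 2 : ℂ)) • aH z := funext he
  have hgc : Continuous g := by
    rw [hgfun]
    refine Continuous.add (continuous_dzbar _ hβH) (Continuous.fun_const_smul ?_ _)
    exact (continuous_matmul hAzbar (continuous_cT hβ.continuous)).sub
      (continuous_matmul (continuous_cT hβ.continuous) hAzbar)
  have haHc : Continuous aH := by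
    rw [haHfun]; exact continuous_matmul hα.continuous (continuous_cT hH.continuous)
  have hec : Continuous e := by
    rw [hefun]; exact hgc.add (haHc.fun_const_smul _)
  -- compact supports
  have hβHsupp : HasCompactSupport fun w => (β w)ᴴ := by
    exact hβsupp.comp_left (g := conjTranspose) Matrix.conjTranspose_zero
  have hgsupp : HasCompactSupport g := by
    rw [hgfun]
    apply HasCompactSupport.add
    · exact hasCompactSupport_dzbar _ hβHsupp
    · apply hβsupp.mono
      intro z hz
      simp only [Function.mem_support] at hz ⊢
      contrapose! hz
      simp [hz]
  have haHsupp : HasCompactSupport aH := by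
    rw [haHfun]
    apply hαsupp.mono
    intro z hz
    simp only [Function.mem_support] at hz ⊢
    contrapose! hz
    simp [hz]
  -- integrability of the four quadratic integrands
  have hint : ∀ (X Y : ℂ → Matrix (Fin N) (Fin N) ℂ), Continuous X → Continuous Y →
      HasCompactSupport Y → Integrable (fun z => ((X z)ᴴ * Y z).trace) := by
    intro X Y hX hY hYs
    apply Continuous.integrable_of_hasCompactSupport
    · exact (trCLM _).continuous.comp (continuous_matmul (continuous_cT hX) hY)
    · apply hYs.mono
      intro z hz
      simp only [Function.mem_support] at hz ⊢
      contrapose! hz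
      simp [hz]
  have hi11 : Integrable (fun z => ((g z)ᴴ * g z).trace) := hint g g hgc hgc hgsupp
  have hi12 : Integrable (fun z => ((g z)ᴴ * aH z).trace) := hint g aH hgc haHc haHsupp
  have hi21 : Integrable (fun z => ((aH z)ᴴ * g z).trace) := hint aH g haHc hgc hgsupp
  have hi22 : Integrable (fun z => ((aH z)ᴴ * aH z).trace) := hint aH aH haHc haHc haHsupp
  -- the cross term vanishes by integration by parts
  set P : ℂ → ℂ := fun w => ((β w) * (α w * (H w)ᴴ)).trace with hPdef
  have hβαH : ContDiff ℝ 1 fun w => β w * (α w * (H w)ᴴ) := contDiff_matmul hβ hαH'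
  have hP1 : ContDiff ℝ 1 P := by
    exact (trCLM _).contDiff.comp hβαH
  have hPsupp : HasCompactSupport P := by
    apply hβsupp.mono
    intro z hz
    simp only [Function.mem_support] at hz ⊢
    contrapose! hz
    simp [hPdef, hz]
  have hcross : ∀ z : ℂ, ((g z)ᴴ * aH z).trace = dz P z := by
    intro z
    have hβd : DifferentiableAt ℝ β z := (hβ.differentiable one_ne_zero) z
    have hαd : DifferentiableAt ℝ α z := (hα.differentiable one_ne_zero) z
    have hHd : DifferentiableAt ℝ H z := (hH.differentiable one_ne_zero) z
    have hHHd : DifferentiableAt ℝ (fun w => (H w)ᴴ) z := (hHH.differentiable one_ne_zero) z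
    have hαHd : DifferentiableAt ℝ (fun w => α w * (H w)ᴴ) z := (hαH'.differentiable one_ne_zero) z
    have hβαHd : DifferentiableAt ℝ (fun w => β w * (α w * (H w)ᴴ)) z :=
      (hβαH.differentiable one_ne_zero) z
    have hα' : dz α z = -(Complex.I • (Az z * α z)) := eq_neg_of_add_eq_zero_left (hDzα z)
    have hH' : dzbar H z = -(Complex.I • (Azbar z * H z)) := eq_neg_of_add_eq_zero_left (hDzbarH z)
    rw [hPdef]
    rw [dz_trace hβαHd, dz_matmul hβd hαHd, dz_matmul hαd hHHd, dz_cT hHd]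
    rw [hα', hH', hg z, haH z, dzbar_cT hβd, hAz z]
    have key := trace_cross (Azbar z) (β z) (dz β z) (α z) (H z)
    simp only [conjTranspose_add, conjTranspose_smul, conjTranspose_sub, conjTranspose_mul,
      conjTranspose_conjTranspose, conjTranspose_neg, Complex.star_def, Complex.conj_I,
      neg_smul, neg_neg, ← sub_eq_add_neg] at key ⊢
    exact key
  have hPint : (∫ z : ℂ, dz P z) = 0 := integral_dz_zero P hP1 hPsupp
  have hcrossint : (∫ z : ℂ, ((g z)ᴴ * aH z).trace) = 0 :=
    (integral_congr_ae (Filter.Eventually.of_forall hcross)).trans hPint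
  have hcrossint2 : (∫ z : ℂ, ((aH z)ᴴ * g z).trace) = 0 := by
    have hpt : ∀ z : ℂ, ((aH z)ᴴ * g z).trace
        = (starRingEnd ℂ) (((g z)ᴴ * aH z).trace) := by
      intro z
      rw [show ((aH z)ᴴ * g z) = ((g z)ᴴ * aH z)ᴴ by
        rw [conjTranspose_mul, conjTranspose_conjTranspose], Matrix.trace_conjTranspose]
      rfl
    rw [integral_congr_ae (Filter.Eventually.of_forall hpt), integral_conj, hcrossint, map_zero]
  -- expansion of the square
  have hc2 : star (Complex.I * ((Real.sqrt 2 : ℝ) : ℂ)) * (Complex.I * ((Real.sqrt 2 : ℝ) : ℂ))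
      = 2 := by
    have h2 : ((Real.sqrt 2 : ℝ) : ℂ) * ((Real.sqrt 2 : ℝ) : ℂ) = 2 := by
      rw [← Complex.ofReal_mul, Real.mul_self_sqrt (by norm_num)]
      norm_num
    have hs : star (Complex.I * ((Real.sqrt 2 : ℝ) : ℂ))
        = -Complex.I * ((Real.sqrt 2 : ℝ) : ℂ) := by
      simp [Complex.star_def]
    rw [hs]
    linear_combination h2 - (((Real.sqrt 2 : ℝ) : ℂ) * ((Real.sqrt 2 : ℝ) : ℂ)) * Complex.I_mul_I
  have hpt : ∀ z : ℂ, ((e z)ᴴ * e z).trace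
      = ((g z)ᴴ * g z).trace
        + (Complex.I * ((Real.sqrt 2 : ℝ) : ℂ)) • ((g z)ᴴ * aH z).trace
        + (star (Complex.I * ((Real.sqrt 2 : ℝ) : ℂ))) • ((aH z)ᴴ * g z).trace
        + (2:ℂ) • ((aH z)ᴴ * aH z).trace := by
    intro z
    rw [he z]
    simp only [conjTranspose_add, conjTranspose_smul, Matrix.add_mul, Matrix.mul_add,
      Matrix.smul_mul, Matrix.mul_smul, trace_add, trace_smul, smul_smul, smul_eq_mul]
    linear_combination (((aH z)ᴴ * aH z).trace) * hc2
  have hi12' : Integrable fun z : ℂ =>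
      (Complex.I * ((Real.sqrt 2 : ℝ) : ℂ)) • ((g z)ᴴ * aH z).trace := by
    simpa [smul_eq_mul] using hi12.const_mul (Complex.I * ((Real.sqrt 2 : ℝ) : ℂ))
  have hi21' : Integrable fun z : ℂ =>
      (star (Complex.I * ((Real.sqrt 2 : ℝ) : ℂ))) • ((aH z)ᴴ * g z).trace := by
    simpa [smul_eq_mul] using hi21.const_mul (star (Complex.I * ((Real.sqrt 2 : ℝ) : ℂ)))
  have hi22' : Integrable fun z : ℂ => (2:ℂ) • ((aH z)ᴴ * aH z).trace := by
    simpa [smul_eq_mul] using hi22.const_mul (2:ℂ)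
  have part1 : (∫ z : ℂ, ((e z)ᴴ * e z).trace)
      = (∫ z : ℂ, ((g z)ᴴ * g z).trace) + 2 * (∫ z : ℂ, ((aH z)ᴴ * aH z).trace) := by
    have hI12 : Integrable (fun z : ℂ => ((g z)ᴴ * g z).trace
        + (Complex.I * ((Real.sqrt 2 : ℝ) : ℂ)) • ((g z)ᴴ * aH z).trace) := by
      exact hi11.add hi12'
    have hI123 : Integrable (fun z : ℂ => ((g z)ᴴ * g z).trace
        + (Complex.I * ((Real.sqrt 2 : ℝ) : ℂ)) • ((g z)ᴴ * aH z).trace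
        + (star (Complex.I * ((Real.sqrt 2 : ℝ) : ℂ))) • ((aH z)ᴴ * g z).trace) := by
      exact hI12.add hi21'
    rw [integral_congr_ae (Filter.Eventually.of_forall hpt)]
    rw [integral_add hI123 hi22']
    rw [integral_add hI12 hi21']
    rw [integral_add hi11 hi12']
    rw [integral_smul, integral_smul, integral_smul]
    rw [hcrossint, hcrossint2]
    simp [smul_eq_mul]
  refine ⟨part1, ?_⟩
  -- Part 2
  intro hez
  have h0 : (∫ z : ℂ, ((e z)ᴴ * e z).trace) = 0 := by
    have hzz : ∀ z : ℂ, ((e z)ᴴ * e z).trace = 0 := by intro z; simp [hez z]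
    rw [integral_congr_ae (Filter.Eventually.of_forall hzz), integral_zero]
  have hcast : ∀ (u : ℂ → ℝ), (∫ z : ℂ, ((u z : ℝ) : ℂ)) = ((∫ z : ℂ, u z : ℝ) : ℂ) := by
    intro u; exact integral_ofReal
  have hIg : (∫ z : ℂ, ((g z)ᴴ * g z).trace) = ((∫ z : ℂ, ‖g z‖^2 : ℝ) : ℂ) := by
    rw [integral_congr_ae
      (Filter.Eventually.of_forall (fun z : ℂ => trace_cT_mul_self (g z))),
      hcast (fun z => ‖g z‖^2)]
  have hIa : (∫ z : ℂ, ((aH z)ᴴ * aH z).trace) = ((∫ z : ℂ, ‖aH z‖^2 : ℝ) : ℂ) := by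
    rw [integral_congr_ae
      (Filter.Eventually.of_forall (fun z : ℂ => trace_cT_mul_self (aH z))),
      hcast (fun z => ‖aH z‖^2)]
  have hsum : (∫ z : ℂ, ‖g z‖^2 : ℝ) + 2 * (∫ z : ℂ, ‖aH z‖^2 : ℝ) = 0 := by
    have := part1.symm.trans h0
    rw [hIg, hIa] at this
    exact_mod_cast this
  have hug_int : Integrable (fun z : ℂ => ‖g z‖^2) := by
    apply Continuous.integrable_of_hasCompactSupport (hgc.norm.pow 2)
    apply hgsupp.mono
    intro z hz
    simp only [Function.mem_support] at hz ⊢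
    contrapose! hz
    simp [hz]
  have hua_int : Integrable (fun z : ℂ => ‖aH z‖^2) := by
    apply Continuous.integrable_of_hasCompactSupport (haHc.norm.pow 2)
    apply haHsupp.mono
    intro z hz
    simp only [Function.mem_support] at hz ⊢
    contrapose! hz
    simp [hz]
  have hnn1 : 0 ≤ (∫ z : ℂ, ‖g z‖^2 : ℝ) := integral_nonneg fun z => by positivity
  have hnn2 : 0 ≤ (∫ z : ℂ, ‖aH z‖^2 : ℝ) := integral_nonneg fun z => by positivity
  have hg0 : (∫ z : ℂ, ‖g z‖^2 : ℝ) = 0 := by linarith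
  have ha0 : (∫ z : ℂ, ‖aH z‖^2 : ℝ) = 0 := by linarith
  have hgae : (fun z : ℂ => ‖g z‖^2) =ᵐ[volume] (fun _ => (0:ℝ)) :=
    (integral_eq_zero_iff_of_nonneg_ae
      (Filter.Eventually.of_forall (fun z => by positivity)) hug_int).mp hg0
  have haae : (fun z : ℂ => ‖aH z‖^2) =ᵐ[volume] (fun _ => (0:ℝ)) :=
    (integral_eq_zero_iff_of_nonneg_ae
      (Filter.Eventually.of_forall (fun z => by positivity)) hua_int).mp ha0
  have hgeq : (fun z : ℂ => ‖g z‖^2) = fun _ => (0:ℝ) :=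
    (Continuous.ae_eq_iff_eq volume (hgc.norm.pow 2) continuous_const).mp hgae
  have haeq : (fun z : ℂ => ‖aH z‖^2) = fun _ => (0:ℝ) :=
    (Continuous.ae_eq_iff_eq volume (haHc.norm.pow 2) continuous_const).mp haae
  intro z
  constructor
  · have := congrFun haeq z
    simp only [pow_eq_zero_iff (two_ne_zero), norm_eq_zero] at this
    exact this
  · have := congrFun hgeq z
    simp only [pow_eq_zero_iff (two_ne_zero), norm_eq_zero] at this
    exact this
end
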